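/- For every field F, there do not exist vectors a_1,…,a_9 ∈ F^3 such that for every 3-element subset {i,j,k} of {1,…,9}, the span of {a_i, a_j, a_k} has dimension 2 if {i,j,k} ∈ S0 and dimension 3 if {i,j,k} ∉ S0. In other words, the non-Pappus matroid is not linearly representable over any field. -/

import Mathlib

/-- The collection `S0` of dependent 3-element subsets (3-point lines) of the
non-Pappus matroid on the ground set `{1, …, 9}` (here indexed by `Fin 9`, so that
the paper's element `i` corresponds to `i - 1`):
`S0 = {{1,2,3},{1,5,7},{3,5,9},{2,4,7},{4,5,6},{2,6,9},{1,6,8},{3,4,8}}`. -/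
def S0 : Finset (Finset (Fin 9)) :=
  {{0, 1, 2}, {0, 4, 6}, {2, 4, 8}, {1, 3, 6}, {3, 4, 5}, {1, 5, 8}, {0, 5, 7}, {2, 3, 7}}

lemma det_ne_iff_finrank (F : Type) [Field F] (x y z : Fin 3 → F) :
    (Matrix.of ![x, y, z]).det ≠ 0 ↔
      Module.finrank F (Submodule.span F ({x, y, z} : Set (Fin 3 → F))) = 3 := by
  have h1 : IsUnit (Matrix.of ![x, y, z]) ↔ LinearIndependent F ![x, y, z] :=
    Matrix.linearIndependent_rows_iff_isUnit.symm
  have h2 : Set.range ![x, y, z] = {x, y, z} := by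
    ext w; simp [Matrix.range_cons, Matrix.range_empty]; tauto
  rw [← isUnit_iff_ne_zero, ← Matrix.isUnit_iff_isUnit_det, h1,
    linearIndependent_iff_card_eq_finrank_span, h2]
  simp [Set.finrank, eq_comm]

/-- for every field `F` there are no vectors `a_1, …, a_9 ∈ F^3` such
that for every 3-element subset `{i, j, k}` of `{1, …, 9}` the span of
`{a_i, a_j, a_k}` has dimension `2` if `{i, j, k} ∈ S0` and dimension `3` otherwise;
that is, the non-Pappus matroid is not linearly representable over any field. -/
theorem nonPappus_not_representable (F : Type) [Field F] :
    ¬ ∃ a : Fin 9 → (Fin 3 → F), ∀ i j k : Fin 9, i ≠ j → i ≠ k → j ≠ k →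
      Module.finrank F (Submodule.span F ({a i, a j, a k} : Set (Fin 3 → F))) =
        (if ({i, j, k} : Finset (Fin 9)) ∈ S0 then 2 else 3) := by
  rintro ⟨a, ha⟩
  have key : ∀ i j k : Fin 9, i ≠ j → i ≠ k → j ≠ k →
      ((Matrix.of ![a i, a j, a k]).det = 0 ↔ ({i, j, k} : Finset (Fin 9)) ∈ S0) := by
    intro i j k hij hik hjk
    have h := ha i j k hij hik hjk
    have hiff := det_ne_iff_finrank F (a i) (a j) (a k)
    by_cases hs : ({i, j, k} : Finset (Fin 9)) ∈ S0
    · rw [if_pos hs] at h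
      refine ⟨fun _ => hs, fun _ => ?_⟩
      by_contra hd
      rw [hiff.mp hd] at h; exact (by norm_num : (3:ℕ) ≠ 2) h
    · rw [if_neg hs] at h
      exact ⟨fun hd => absurd hd (hiff.mpr h), fun hm => absurd hm hs⟩
  set B : Matrix (Fin 3) (Fin 3) F := Matrix.of ![a 0, a 1, a 3] with hBdef
  have hB : B.det ≠ 0 := fun h =>
    absurd ((key 0 1 3 (by decide) (by decide) (by decide)).mp h) (by decide)
  have hBu : IsUnit B.det := isUnit_iff_ne_zero.2 hB
  set c : Fin 9 → Fin 3 → F := fun i => Matrix.vecMul (a i) B⁻¹ with hcdef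
  have hmul : ∀ i j k : Fin 9,
      Matrix.of ![c i, c j, c k] = Matrix.of ![a i, a j, a k] * B⁻¹ := by
    intro i j k
    ext r s
    fin_cases r <;>
      simp [hcdef, Matrix.mul_apply, Matrix.vecMul, dotProduct]
  have ckey : ∀ i j k : Fin 9, i ≠ j → i ≠ k → j ≠ k →
      ((Matrix.of ![c i, c j, c k]).det = 0 ↔ ({i, j, k} : Finset (Fin 9)) ∈ S0) := by
    intro i j k hij hik hjk
    rw [hmul, Matrix.det_mul, Matrix.det_nonsing_inv, Ring.inverse_eq_inv, ← key i j k hij hik hjk]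
    constructor
    · intro h
      rcases mul_eq_zero.mp h with h | h
      · exact h
      · exact absurd h (inv_ne_zero hB)
    · intro h; rw [h, zero_mul]
  have hBmul : B * B⁻¹ = 1 := Matrix.mul_nonsing_inv B hBu
  have hrow : ∀ (p : Fin 9) (r : Fin 3), a p = B r →
      c p = (1 : Matrix (Fin 3) (Fin 3) F) r := by
    intro p r h
    funext s
    have h2 : c p s = (B * B⁻¹) r s := by
      simp [hcdef, h, Matrix.mul_apply, Matrix.vecMul, dotProduct]
    rw [h2, hBmul]
  have hc0 : c 0 = ![1, 0, 0] := by
    rw [hrow 0 0 rfl]; funext s; fin_cases s <;> simp [Matrix.one_apply]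
  have hc1 : c 1 = ![0, 1, 0] := by
    rw [hrow 1 1 rfl]; funext s; fin_cases s <;> simp [Matrix.one_apply]
  have hc3 : c 3 = ![0, 0, 1] := by
    rw [hrow 3 2 rfl]; funext s; fin_cases s <;> simp [Matrix.one_apply]
  have L1 := (ckey 0 1 2 (by decide) (by decide) (by decide)).mpr (by decide)
  have L2 := (ckey 0 4 6 (by decide) (by decide) (by decide)).mpr (by decide)
  have L3 := (ckey 2 4 8 (by decide) (by decide) (by decide)).mpr (by decide)
  have L4 := (ckey 1 3 6 (by decide) (by decide) (by decide)).mpr (by decide)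
  have L5 := (ckey 3 4 5 (by decide) (by decide) (by decide)).mpr (by decide)
  have L6 := (ckey 1 5 8 (by decide) (by decide) (by decide)).mpr (by decide)
  have L7 := (ckey 0 5 7 (by decide) (by decide) (by decide)).mpr (by decide)
  have L8 := (ckey 2 3 7 (by decide) (by decide) (by decide)).mpr (by decide)
  have N1 : ¬ (Matrix.of ![c 1, c 2, c 3]).det = 0 := fun h => absurd ((ckey 1 2 3 (by decide) (by decide) (by decide)).mp h) (by decide)
  have N2 : ¬ (Matrix.of ![c 0, c 1, c 4]).det = 0 := fun h => absurd ((ckey 0 1 4 (by decide) (by decide) (by decide)).mp h) (by decide)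
  have N3 : ¬ (Matrix.of ![c 0, c 3, c 5]).det = 0 := fun h => absurd ((ckey 0 3 5 (by decide) (by decide) (by decide)).mp h) (by decide)
  have N4 : ¬ (Matrix.of ![c 0, c 1, c 5]).det = 0 := fun h => absurd ((ckey 0 1 5 (by decide) (by decide) (by decide)).mp h) (by decide)
  have NG : ¬ (Matrix.of ![c 6, c 7, c 8]).det = 0 := fun h => absurd ((ckey 6 7 8 (by decide) (by decide) (by decide)).mp h) (by decide)
  clear ha key hB hBu hmul ckey hBmul hrow hcdef hBdef
  simp only [Matrix.det_fin_three, Matrix.of_apply, Matrix.cons_val', Matrix.cons_val_zero,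
    Matrix.cons_val_one, Matrix.head_cons, Matrix.empty_val', Matrix.cons_val_fin_one,
    Matrix.head_fin_const, Matrix.cons_val_two, Matrix.tail_cons, hc0, hc1, hc3] at L1 L2 L3 L4 L5 L6 L7 L8 N1 N2 N3 N4 NG
  norm_num at L1 L2 L3 L4 L5 L6 L7 L8 N1 N2 N3 N4 NG
  apply NG
  have big : c 2 0 * (c 4 2 * (c 5 1 * (c 5 2 *
      (c 6 0 * c 7 1 * c 8 2 - c 6 0 * c 7 2 * c 8 1 - c 6 1 * c 7 0 * c 8 2 +
        c 6 1 * c 7 2 * c 8 0 + c 6 2 * c 7 0 * c 8 1 - c 6 2 * c 7 1 * c 8 0)))) = 0 := by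
    linear_combination (c 2 0 * c 5 1 * c 5 2 * (c 7 0 * c 8 2 - c 7 2 * c 8 0)) * L2
      - (c 5 1 * c 5 2 * c 6 2 * c 7 0) * L3
      - (c 2 0 * c 5 2 * c 6 2 * c 7 1 * c 8 2) * L5
      + (c 2 0 * c 5 2 * c 6 2 * c 4 1 * c 7 1) * L6
      + (c 2 0 * c 5 2 * c 6 2 * c 4 1 * c 8 0) * L7
      - (c 5 1 * c 5 2 * c 6 2 * (c 4 0 * c 8 2 - c 4 2 * c 8 0)) * L8
      + (c 5 1 * c 5 2 * c 6 2 * c 7 0 * (c 4 0 * c 8 1 - c 4 1 * c 8 0)) * L1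
      + (c 2 0 * c 4 2 * c 5 1 * c 5 2 * (c 7 1 * c 8 2 - c 7 2 * c 8 1)) * L4
  rcases mul_eq_zero.mp big with h | big
  · exact absurd h N1
  rcases mul_eq_zero.mp big with h | big
  · exact absurd h N2
  rcases mul_eq_zero.mp big with h | big
  · exact absurd h N3
  rcases mul_eq_zero.mp big with h | big
  · exact absurd h N4
  exact big
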